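/- Let (Ω, F, P) be a probability space with sub-σ-algebras G_n ⊆ F, and for each n let Δ_n be a G_n-measurable real random variable and Δ_n^{*1}, …, Δ_n^{*B} real random variables that are conditionally independent given G_n. Let Φ be the cumulative distribution function of a mean-zero Gaussian law on ℝ. If (i) P(Δ_n ≤ x) → Φ(x) for every x ∈ ℝ, and (ii) for each b = 1,…,B and every x ∈ ℝ the conditional probability E[1{Δ_n^{*b} ≤ x} | G_n] → Φ(x) in probability, then the vector (Δ_n, Δ_n^{*1}, …, Δ_n^{*B}) converges in distribution to (Z₀, Z₁, …, Z_B), where Z₀, …, Z_B are i.i.d. with distribution function Φ; in particular, for all x₀, x₁, …, x_B ∈ ℝ, P(Δ_n ≤ x₀, Δ_n^{*1} ≤ x₁, …, Δ_n^{*B} ≤ x_B) → Φ(x₀)Φ(x₁)⋯Φ(x_B). -/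

import Mathlib

open MeasureTheory ProbabilityTheory Filter Set Topology

section JointCLTAux

variable {ι : Type*} [Fintype ι] [DecidableEq ι]

lemma jclt_measurableSet_mixed (t : Finset ι) (a b : ι → ℝ) :
    MeasurableSet (univ.pi fun i => if i ∈ t then Ioc (a i) (b i) else Iic (b i)) := by
  classical
  refine MeasurableSet.univ_pi fun i => ?_
  by_cases hi : i ∈ t
  · rw [if_pos hi]; exact measurableSet_Ioc
  · rw [if_neg hi]; exact measurableSet_Iic

lemma jclt_tendsto_mixed_box
    {μn : ℕ → Measure (ι → ℝ)} {μ : Measure (ι → ℝ)}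
    [∀ n, IsProbabilityMeasure (μn n)] [IsProbabilityMeasure μ]
    (h : ∀ x : ι → ℝ, Tendsto (fun n => (μn n (univ.pi fun i => Iic (x i))).toReal) atTop
        (𝓝 ((μ (univ.pi fun i => Iic (x i))).toReal)))
    (t : Finset ι) :
    ∀ a b : ι → ℝ, Tendsto (fun n => (μn n (univ.pi fun i =>
        if i ∈ t then Ioc (a i) (b i) else Iic (b i))).toReal) atTop
      (𝓝 ((μ (univ.pi fun i => if i ∈ t then Ioc (a i) (b i) else Iic (b i))).toReal)) := by
  classical
  induction t using Finset.induction_on with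
  | empty => intro a b; simpa using h b
  | @insert i t hi ih =>
    intro a b
    by_cases hab : a i ≤ b i
    · -- set identity
      set b' : ι → ℝ := Function.update b i (a i) with hb'
      have hkey : (univ.pi fun j => if j ∈ insert i t then Ioc (a j) (b j) else Iic (b j))
          = (univ.pi fun j => if j ∈ t then Ioc (a j) (b j) else Iic (b j))
            \ (univ.pi fun j => if j ∈ t then Ioc (a j) (b' j) else Iic (b' j)) := by
        ext x
        simp only [Set.mem_pi, Set.mem_univ, true_implies, Set.mem_diff, Finset.mem_insert]
        constructor
        · intro hx
          have hxi := hx i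
          rw [if_pos (Or.inl rfl)] at hxi
          refine ⟨fun j => ?_, fun hcon => ?_⟩
          · have hxj := hx j
            by_cases hj : j = i
            · subst hj
              rw [if_pos (Or.inl rfl)] at hxj
              rw [if_neg hi]
              exact hxj.2
            · by_cases hjt : j ∈ t
              · rw [if_pos (Or.inr hjt)] at hxj; rw [if_pos hjt]; exact hxj
              · rw [if_neg (by tauto)] at hxj; rw [if_neg hjt]; exact hxj
          · have hconi := hcon i
            rw [if_neg hi, hb', Function.update_self] at hconi
            exact absurd hconi (not_le.mpr hxi.1)
        · rintro ⟨h1, h2⟩ j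
          by_cases hj : j = i
          · subst hj
            rw [if_pos (Or.inl rfl)]
            have hxb : x j ≤ b j := by
              have := h1 j; rw [if_neg hi] at this; exact this
            refine ⟨?_, hxb⟩
            by_contra hcon
            apply h2
            intro k
            by_cases hk : k = j
            · subst hk; rw [if_neg hi, hb', Function.update_self]; exact not_lt.mp hcon
            · have h1k := h1 k
              have hb'k : b' k = b k := by rw [hb', Function.update_of_ne hk]
              by_cases hkt : k ∈ t
              · rw [if_pos hkt] at h1k ⊢; rw [hb'k]; exact h1k
              · rw [if_neg hkt] at h1k ⊢; rw [hb'k]; exact h1k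
          · have h1j := h1 j
            by_cases hjt : j ∈ t
            · rw [if_pos (Or.inr hjt)]; rw [if_pos hjt] at h1j; exact h1j
            · rw [if_neg (by tauto)]; rw [if_neg hjt] at h1j; exact h1j
      have hsub : (univ.pi fun j => if j ∈ t then Ioc (a j) (b' j) else Iic (b' j))
          ⊆ (univ.pi fun j => if j ∈ t then Ioc (a j) (b j) else Iic (b j)) := by
        refine pi_mono fun j _ => ?_
        by_cases hjt : j ∈ t
        · rw [if_pos hjt, if_pos hjt, hb', Function.update_of_ne (by rintro rfl; exact hi hjt)]
        · rw [if_neg hjt, if_neg hjt]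
          by_cases hj : j = i
          · subst hj; rw [hb', Function.update_self]; exact Iic_subset_Iic.mpr hab
          · rw [hb', Function.update_of_ne hj]
      have harith : ∀ (ν : Measure (ι → ℝ)) [IsProbabilityMeasure ν],
          (ν ((univ.pi fun j => if j ∈ t then Ioc (a j) (b j) else Iic (b j))
            \ (univ.pi fun j => if j ∈ t then Ioc (a j) (b' j) else Iic (b' j)))).toReal
          = (ν (univ.pi fun j => if j ∈ t then Ioc (a j) (b j) else Iic (b j))).toReal
            - (ν (univ.pi fun j => if j ∈ t then Ioc (a j) (b' j) else Iic (b' j))).toReal := by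
        intro ν _
        rw [measure_diff hsub (jclt_measurableSet_mixed t a b').nullMeasurableSet
          (measure_ne_top ν _),
          ENNReal.toReal_sub_of_le (measure_mono hsub) (measure_ne_top ν _)]
      rw [hkey, harith μ]
      have := (ih a b).sub (ih a b')
      refine this.congr fun n => ?_
      rw [harith (μn n)]
    · -- empty box
      have hempty : (univ.pi fun j => if j ∈ insert i t then Ioc (a j) (b j) else Iic (b j))
          = (∅ : Set (ι → ℝ)) := by
        apply univ_pi_eq_empty (i := i)
        rw [if_pos (Finset.mem_insert_self i t), Ioc_eq_empty (fun hc => hab hc.le)]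
      rw [hempty]
      simpa using tendsto_const_nhds
end JointCLTAux

section JointCLTAux2

variable {ι : Type*} [Fintype ι] [DecidableEq ι]

def jcltBox (p : (ι → ℝ) × (ι → ℝ)) : Set (ι → ℝ) := univ.pi fun i => Ioc (p.1 i) (p.2 i)

lemma jclt_measurableSet_box (p : (ι → ℝ) × (ι → ℝ)) : MeasurableSet (jcltBox p) :=
  MeasurableSet.univ_pi fun _ => measurableSet_Ioc

def jcltUnionBoxes : List ((ι → ℝ) × (ι → ℝ)) → Set (ι → ℝ)
  | [] => ∅
  | p :: L => jcltBox p ∪ jcltUnionBoxes L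

lemma jclt_measurableSet_unionBoxes (L : List ((ι → ℝ) × (ι → ℝ))) :
    MeasurableSet (jcltUnionBoxes L) := by
  induction L with
  | nil => exact MeasurableSet.empty
  | cons p L ih => exact (jclt_measurableSet_box p).union ih

lemma jclt_box_inter_box (p q : (ι → ℝ) × (ι → ℝ)) :
    jcltBox p ∩ jcltBox q
      = jcltBox (fun i => max (p.1 i) (q.1 i), fun i => min (p.2 i) (q.2 i)) := by
  rw [jcltBox, jcltBox, jcltBox, ← pi_inter_distrib]
  exact pi_congr rfl fun i _ => Ioc_inter_Ioc

lemma jclt_box_inter_unionBoxes (p : (ι → ℝ) × (ι → ℝ)) (L : List ((ι → ℝ) × (ι → ℝ))) :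
    jcltBox p ∩ jcltUnionBoxes L
      = jcltUnionBoxes (L.map (fun q =>
          (fun i => max (p.1 i) (q.1 i), fun i => min (p.2 i) (q.2 i)))) := by
  induction L with
  | nil => simp [jcltUnionBoxes]
  | cons q L ih =>
    simp only [jcltUnionBoxes, List.map_cons, inter_union_distrib_left, ih,
      jclt_box_inter_box]

lemma jclt_toReal_union {X : Type*} [MeasurableSpace X] (ν : Measure X) [IsProbabilityMeasure ν]
    (A Bs : Set X) (hB : MeasurableSet Bs) :
    (ν (A ∪ Bs)).toReal = (ν A).toReal + (ν Bs).toReal - (ν (A ∩ Bs)).toReal := by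
  have h := measure_union_add_inter (μ := ν) A hB
  have h2 := congrArg ENNReal.toReal h
  rw [ENNReal.toReal_add (measure_ne_top _ _) (measure_ne_top _ _),
    ENNReal.toReal_add (measure_ne_top _ _) (measure_ne_top _ _)] at h2
  linarith

lemma jclt_tendsto_unionBoxes
    {μn : ℕ → Measure (ι → ℝ)} {μ : Measure (ι → ℝ)}
    [∀ n, IsProbabilityMeasure (μn n)] [IsProbabilityMeasure μ]
    (h : ∀ x : ι → ℝ, Tendsto (fun n => (μn n (univ.pi fun i => Iic (x i))).toReal) atTop
        (𝓝 ((μ (univ.pi fun i => Iic (x i))).toReal))) :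
    ∀ (k : ℕ) (L : List ((ι → ℝ) × (ι → ℝ))), L.length ≤ k →
      Tendsto (fun n => (μn n (jcltUnionBoxes L)).toReal) atTop
        (𝓝 ((μ (jcltUnionBoxes L)).toReal)) := by
  have hbox : ∀ p : (ι → ℝ) × (ι → ℝ),
      Tendsto (fun n => (μn n (jcltBox p)).toReal) atTop (𝓝 ((μ (jcltBox p)).toReal)) := by
    intro p
    have := jclt_tendsto_mixed_box h Finset.univ p.1 p.2
    have heq : (univ.pi fun i =>
        if i ∈ Finset.univ then Ioc (p.1 i) (p.2 i) else Iic (p.2 i)) = jcltBox p := by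
      rw [jcltBox]
      exact pi_congr rfl fun i _ => by rw [if_pos (Finset.mem_univ i)]
    rwa [heq] at this
  intro k
  induction k with
  | zero =>
    intro L hL
    rw [Nat.le_zero, List.length_eq_zero_iff] at hL
    subst hL
    simp only [jcltUnionBoxes, measure_empty, ENNReal.toReal_zero]
    exact tendsto_const_nhds
  | succ k ihk =>
    intro L hL
    match L with
    | [] =>
      simp only [jcltUnionBoxes, measure_empty, ENNReal.toReal_zero]
      exact tendsto_const_nhds
    | p :: L' =>
      have hlen : L'.length ≤ k := by simpa using Nat.succ_le_succ_iff.mp hL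
      have h1 := ihk L' hlen
      have h2 := ihk (L'.map (fun q =>
          (fun i => max (p.1 i) (q.1 i), fun i => min (p.2 i) (q.2 i)))) (by simpa using hlen)
      rw [← jclt_box_inter_unionBoxes] at h2
      have harith : ∀ (ν : Measure (ι → ℝ)) [IsProbabilityMeasure ν],
          (ν (jcltUnionBoxes (p :: L'))).toReal
            = (ν (jcltBox p)).toReal + (ν (jcltUnionBoxes L')).toReal
              - (ν (jcltBox p ∩ jcltUnionBoxes L')).toReal := by
        intro ν _
        exact jclt_toReal_union ν _ _ (jclt_measurableSet_unionBoxes L')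
      rw [harith μ]
      exact (((hbox p).add h1).sub h2).congr fun n => by rw [harith (μn n)]

end JointCLTAux2
section JointCLTAux3

variable {ι : Type*} [Fintype ι] [DecidableEq ι]

lemma jclt_unionBoxes_subset {G : Set (ι → ℝ)} :
    ∀ {L : List ((ι → ℝ) × (ι → ℝ))}, (∀ p ∈ L, jcltBox p ⊆ G) → jcltUnionBoxes L ⊆ G := by
  intro L
  induction L with
  | nil => intro _; rw [jcltUnionBoxes]; exact empty_subset G
  | cons p L ih =>
    intro hp
    exact union_subset (hp p (List.mem_cons_self)) (ih fun q hq => hp q (List.mem_cons_of_mem p hq))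

lemma jclt_unionBoxes_append (L1 L2 : List ((ι → ℝ) × (ι → ℝ))) :
    jcltUnionBoxes (L1 ++ L2) = jcltUnionBoxes L1 ∪ jcltUnionBoxes L2 := by
  induction L1 with
  | nil => simp [jcltUnionBoxes]
  | cons p L ih => simp [jcltUnionBoxes, ih, union_assoc]

lemma jclt_le_liminf_open
    {μn : ℕ → Measure (ι → ℝ)} {μ : Measure (ι → ℝ)}
    [∀ n, IsProbabilityMeasure (μn n)] [IsProbabilityMeasure μ]
    (h : ∀ x : ι → ℝ, Tendsto (fun n => (μn n (univ.pi fun i => Iic (x i))).toReal) atTop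
        (𝓝 ((μ (univ.pi fun i => Iic (x i))).toReal)))
    (G : Set (ι → ℝ)) (hG : IsOpen G) (c : ℝ) (hc : c < (μ G).toReal) :
    ∀ᶠ n in atTop, c < (μn n G).toReal := by
  classical
  set T : Set ((ι → ℚ) × (ι → ℚ)) :=
    {p | (univ.pi fun i => Icc ((p.1 i : ℝ)) ((p.2 i : ℝ))) ⊆ G} with hT
  have hcover : G = ⋃ p ∈ T, jcltBox (fun i => ((p.1 i : ℝ)), fun i => ((p.2 i : ℝ))) := by
    apply Subset.antisymm
    · intro x hx
      obtain ⟨δ, hδ, hball⟩ := Metric.isOpen_iff.mp hG x hx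
      have hq : ∀ i : ι, ∃ q : ℚ, x i - δ < q ∧ (q : ℝ) < x i := by
        intro i; exact_mod_cast exists_rat_btwn (by linarith : x i - δ < x i)
      have hr : ∀ i : ι, ∃ r : ℚ, x i < r ∧ (r : ℝ) < x i + δ := by
        intro i; exact_mod_cast exists_rat_btwn (by linarith : x i < x i + δ)
      choose q hq1 hq2 using hq
      choose r hr1 hr2 using hr
      have hmem : (q, r) ∈ T := by
        rw [hT]
        intro y hy
        apply hball
        rw [Metric.mem_ball, dist_pi_lt_iff hδ]
        intro i
        have hyi := hy i (mem_univ i)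
        simp only [Set.mem_Icc] at hyi
        rw [Real.dist_eq, abs_sub_lt_iff]
        refine ⟨by have := hr2 i; have := hyi.2; linarith,
          by have := hq1 i; have := hyi.1; linarith⟩
      refine mem_biUnion hmem ?_
      intro i _
      exact ⟨hq2 i, le_of_lt (hr1 i)⟩
    · refine iUnion₂_subset fun p hp => ?_
      refine Subset.trans ?_ hp
      exact pi_mono fun i _ => Ioc_subset_Icc_self
  by_cases hTne : T.Nonempty
  · obtain ⟨f, hf⟩ := (Set.to_countable T).exists_eq_range hTne
    set pf : ℕ → (ι → ℝ) × (ι → ℝ) :=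
      fun k => (fun i => (((f k).1 i : ℝ)), fun i => (((f k).2 i : ℝ))) with hpf
    set W : ℕ → Set (ι → ℝ) := fun K => jcltUnionBoxes ((List.range K).map pf) with hW
    have hWsucc : ∀ K, W (K + 1) = W K ∪ jcltBox (pf K) := by
      intro K
      rw [hW]
      simp only [List.range_succ, List.map_append, List.map_cons, List.map_nil,
        jclt_unionBoxes_append]
      rw [jcltUnionBoxes, jcltUnionBoxes, union_empty]
    have hWmono : Monotone W := by
      apply monotone_nat_of_le_succ
      intro K
      rw [hWsucc K]
      exact subset_union_left
    have hWsub : ∀ K, W K ⊆ G := by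
      intro K
      apply jclt_unionBoxes_subset
      intro p hp
      simp only [List.mem_map] at hp
      obtain ⟨k, _, rfl⟩ := hp
      have hfk : f k ∈ T := by rw [hf]; exact ⟨k, rfl⟩
      calc jcltBox (pf k)
          ⊆ univ.pi (fun i => Icc (((f k).1 i : ℝ)) (((f k).2 i : ℝ))) :=
            pi_mono fun i _ => Ioc_subset_Icc_self
        _ ⊆ G := hfk
    have hWunion : (⋃ K, W K) = G := by
      apply Subset.antisymm (iUnion_subset hWsub)
      conv_lhs => rw [hcover]
      refine iUnion₂_subset fun p hp => ?_
      rw [hf] at hp; obtain ⟨k, rfl⟩ := hp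
      refine subset_trans ?_ (subset_iUnion W (k + 1))
      rw [hWsucc k]
      exact subset_union_right
    have hμW : Tendsto (fun K => (μ (W K)).toReal) atTop (𝓝 ((μ G).toReal)) := by
      have h1 : Tendsto (fun K => μ (W K)) atTop (𝓝 (μ (⋃ K, W K))) :=
        tendsto_measure_iUnion_atTop hWmono
      rw [hWunion] at h1
      exact (ENNReal.tendsto_toReal (measure_ne_top μ G)).comp h1
    obtain ⟨K0, hK0⟩ := (hμW.eventually (eventually_gt_nhds hc)).exists
    have hconv := jclt_tendsto_unionBoxes h ((List.range K0).map pf).length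
      ((List.range K0).map pf) le_rfl
    have hev2 : ∀ᶠ n in atTop, c < (μn n (W K0)).toReal :=
      hconv.eventually (eventually_gt_nhds hK0)
    filter_upwards [hev2] with n hn
    exact lt_of_lt_of_le hn
      (ENNReal.toReal_mono (measure_ne_top _ _) (measure_mono (hWsub K0)))
  · have hGempty : G = ∅ := by
      rw [hcover]
      rw [Set.not_nonempty_iff_eq_empty] at hTne
      simp [hTne]
    rw [hGempty] at hc ⊢
    simp only [measure_empty, ENNReal.toReal_zero] at hc ⊢
    exact Eventually.of_forall fun _ => hc

lemma jclt_tendsto_integral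
    {μn : ℕ → Measure (ι → ℝ)} {μ : Measure (ι → ℝ)}
    [∀ n, IsProbabilityMeasure (μn n)] [IsProbabilityMeasure μ]
    (h : ∀ x : ι → ℝ, Tendsto (fun n => (μn n (univ.pi fun i => Iic (x i))).toReal) atTop
        (𝓝 ((μ (univ.pi fun i => Iic (x i))).toReal)))
    (g : BoundedContinuousFunction (ι → ℝ) ℝ) :
    Tendsto (fun n => ∫ z, g z ∂(μn n)) atTop (𝓝 (∫ z, g z ∂μ)) := by
  set μs : ℕ → ProbabilityMeasure (ι → ℝ) := fun n => ⟨μn n, inferInstance⟩ with hμs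
  set ν : ProbabilityMeasure (ι → ℝ) := ⟨μ, inferInstance⟩ with hν
  have main : Tendsto μs atTop (𝓝 ν) := by
    apply MeasureTheory.tendsto_of_forall_isOpen_le_liminf
    intro G hGopen
    by_contra hcon
    rw [not_le] at hcon
    obtain ⟨c, hc1, hc2⟩ := exists_between hcon
    have hc2' : (c : ℝ) < (μ G).toReal := NNReal.coe_lt_coe.mpr hc2
    have hev := jclt_le_liminf_open h G hGopen c hc2'
    have hle : c ≤ atTop.liminf (fun n => μs n G) := by
      apply le_liminf_of_le
      · exact (isBoundedUnder_of ⟨1, fun n => (μs n).apply_le_one G⟩).isCoboundedUnder_ge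
      · filter_upwards [hev] with n hn
        exact NNReal.coe_le_coe.mp (le_of_lt hn)
    exact absurd hle (not_le.mpr hc1)
  exact ProbabilityMeasure.tendsto_iff_forall_integral_tendsto.mp main g

end JointCLTAux3
section JointCLTAux4

lemma jclt_tendstoInMeasure_comp {Ω : Type*} {F : MeasurableSpace Ω} {P : Measure Ω}
    {f : ℕ → Ω → ℝ} {g : Ω → ℝ} (hf : TendstoInMeasure P f atTop g)
    {ns : ℕ → ℕ} (hns : Tendsto ns atTop atTop) :
    TendstoInMeasure P (fun k => f (ns k)) atTop g :=
  fun ε hε => (hf ε hε).comp hns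

lemma jclt_exists_subseq_ae {Ω : Type*} {F : MeasurableSpace Ω} {P : Measure Ω}
    {κ : Type*} (l : List κ) (f : ℕ → κ → Ω → ℝ) (g : κ → Ω → ℝ)
    (hf : ∀ b ∈ l, TendstoInMeasure P (fun n => f n b) atTop (g b)) :
    ∃ ms : ℕ → ℕ, StrictMono ms ∧
      ∀ b ∈ l, ∀ᵐ ω ∂P, Tendsto (fun k => f (ms k) b ω) atTop (𝓝 (g b ω)) := by
  induction l generalizing f with
  | nil => exact ⟨id, strictMono_id, fun b hb => absurd hb List.not_mem_nil⟩
  | cons b l ih =>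
    obtain ⟨m1, hm1, hae1⟩ := (hf b (List.mem_cons_self)).exists_seq_tendsto_ae
    obtain ⟨m2, hm2, hae2⟩ := ih (fun n => f (m1 n))
      (fun c hc => jclt_tendstoInMeasure_comp (hf c (List.mem_cons_of_mem b hc))
        hm1.tendsto_atTop)
    refine ⟨m1 ∘ m2, hm1.comp hm2, ?_⟩
    intro c hc
    rcases List.mem_cons.mp hc with rfl | hc'
    · filter_upwards [hae1] with ω hω
      exact hω.comp hm2.tendsto_atTop
    · exact hae2 c hc'

lemma jclt_err_tendsto {Ω : Type*} {F : MeasurableSpace Ω} (P : Measure Ω)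
    [IsProbabilityMeasure P] {B : ℕ} (f : ℕ → Fin B → Ω → ℝ) (c : Fin B → ℝ)
    (hmeas : ∀ n b, AEStronglyMeasurable (f n b) P)
    (h0 : ∀ n b, (0 : Ω → ℝ) ≤ᵐ[P] f n b) (h1 : ∀ n b, f n b ≤ᵐ[P] fun _ => 1)
    (hc0 : ∀ b, 0 ≤ c b) (hc1 : ∀ b, c b ≤ 1)
    (hconv : ∀ b, TendstoInMeasure P (fun n => f n b) atTop (fun _ => c b)) :
    Tendsto (fun n => ∫ ω, |(∏ b, f n b ω) - ∏ b, c b| ∂P) atTop (𝓝 0) := by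
  classical
  apply tendsto_of_subseq_tendsto
  intro ns hns
  obtain ⟨ms, hms, hae⟩ := jclt_exists_subseq_ae (List.finRange B)
    (fun k b => f (ns k) b) (fun b _ => c b)
    (fun b _ => jclt_tendstoInMeasure_comp (hconv b) hns)
  refine ⟨ms, ?_⟩
  have haeall : ∀ᵐ ω ∂P, ∀ b : Fin B, Tendsto (fun k => f (ns (ms k)) b ω) atTop (𝓝 (c b)) := by
    rw [ae_all_iff]
    intro b
    exact hae b (List.mem_finRange b)
  have hbound : ∀ᵐ ω ∂P, ∀ (n : ℕ) (b : Fin B), 0 ≤ f n b ω ∧ f n b ω ≤ 1 := by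
    rw [ae_all_iff]; intro n; rw [ae_all_iff]; intro b
    filter_upwards [h0 n b, h1 n b] with ω ha hb
    exact ⟨ha, hb⟩
  have hFm : ∀ k, AEStronglyMeasurable (fun ω => |(∏ b, f (ns (ms k)) b ω) - ∏ b, c b|) P := by
    intro k
    have h1m : AEStronglyMeasurable (fun ω => ∏ b, f (ns (ms k)) b ω) P :=
      Finset.aestronglyMeasurable_fun_prod _ (fun b _ => hmeas (ns (ms k)) b)
    have h2m : AEStronglyMeasurable (fun ω => (∏ b, f (ns (ms k)) b ω) - ∏ b, c b) P :=
      h1m.sub aestronglyMeasurable_const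
    exact h2m.norm.congr (Filter.Eventually.of_forall fun ω => by simp [Real.norm_eq_abs])
  have h := tendsto_integral_of_dominated_convergence (μ := P)
      (F := fun k ω => |(∏ b, f (ns (ms k)) b ω) - ∏ b, c b|)
      (f := fun _ => (0 : ℝ)) (bound := fun _ => 2)
      hFm
      (integrable_const (μ := P) 2)
      ?_ ?_
  · simpa using h
  · intro k
    filter_upwards [hbound] with ω hω
    have hprod0 : 0 ≤ ∏ b, f (ns (ms k)) b ω :=
      Finset.prod_nonneg fun b _ => (hω (ns (ms k)) b).1
    have hprod1 : (∏ b, f (ns (ms k)) b ω) ≤ 1 :=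
      Finset.prod_le_one (fun b _ => (hω (ns (ms k)) b).1) (fun b _ => (hω (ns (ms k)) b).2)
    have hcprod0 : 0 ≤ ∏ b, c b := Finset.prod_nonneg fun b _ => hc0 b
    have hcprod1 : (∏ b, c b) ≤ 1 := Finset.prod_le_one (fun b _ => hc0 b) (fun b _ => hc1 b)
    rw [Real.norm_eq_abs, abs_abs, abs_sub_le_iff]
    constructor <;> linarith
  · filter_upwards [haeall] with ω hω
    have hp : Tendsto (fun k => ∏ b, f (ns (ms k)) b ω) atTop (𝓝 (∏ b, c b)) :=
      tendsto_finset_prod _ (fun b _ => hω b)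
    have := (hp.sub (tendsto_const_nhds (x := ∏ b, c b))).abs
    simpa using this

end JointCLTAux4
section JointCLTAux5

lemma jclt_step1 {Ω : Type*} {F : MeasurableSpace Ω} (P : Measure Ω) [IsProbabilityMeasure P]
    {B : ℕ} (𝒢 : ℕ → MeasurableSpace Ω) (h𝒢 : ∀ n, 𝒢 n ≤ F)
    (c : Fin B → ℝ) (Φ0 : ℝ)
    (Δ : ℕ → Ω → ℝ) (hΔmeas : ∀ n, Measurable[𝒢 n] (Δ n))
    (Δs : ℕ → Fin B → Ω → ℝ) (hΔsmeas : ∀ n b, Measurable (Δs n b))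
    (x₀ : ℝ) (x : Fin B → ℝ)
    (hcondindep : ∀ n : ℕ,
      (P[Set.indicator {ω | ∀ b, Δs n b ω ≤ x b} (fun _ => (1 : ℝ)) | 𝒢 n])
        =ᵐ[P] fun ω =>
          ∏ b : Fin B, (P[Set.indicator {ω' | Δs n b ω' ≤ x b} (fun _ => (1 : ℝ)) | 𝒢 n]) ω)
    (hΔconv : Tendsto (fun n => (P {ω | Δ n ω ≤ x₀}).toReal) atTop (𝓝 Φ0))
    (hc0 : ∀ b, 0 ≤ c b) (hc1 : ∀ b, c b ≤ 1)
    (hΔsconv : ∀ b, TendstoInMeasure P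
        (fun n => P[Set.indicator {ω' | Δs n b ω' ≤ x b} (fun _ => (1 : ℝ)) | 𝒢 n])
        atTop (fun _ => c b)) :
    Tendsto (fun n => (P {ω | Δ n ω ≤ x₀ ∧ ∀ b, Δs n b ω ≤ x b}).toReal) atTop
      (𝓝 (Φ0 * ∏ b, c b)) := by
  classical
  set K : ℝ := ∏ b, c b with hK
  set Fn : ℕ → Fin B → Ω → ℝ :=
    fun n b => P[Set.indicator {ω' | Δs n b ω' ≤ x b} (fun _ => (1 : ℝ)) | 𝒢 n] with hFn
  set A : ℕ → Set Ω := fun n => {ω | Δ n ω ≤ x₀} with hA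
  set Bs : ℕ → Set Ω := fun n => {ω | ∀ b, Δs n b ω ≤ x b} with hBs
  have hAmeasG : ∀ n, MeasurableSet[𝒢 n] (A n) := fun n => (hΔmeas n) measurableSet_Iic
  have hAmeas : ∀ n, MeasurableSet (A n) := fun n => h𝒢 n _ (hAmeasG n)
  have hBmeas : ∀ n, MeasurableSet (Bs n) := by
    intro n
    have hBeq : Bs n = ⋂ b, {ω | Δs n b ω ≤ x b} := by
      ext ω; simp [hBs, Set.mem_iInter]
    rw [hBeq]
    exact MeasurableSet.iInter fun b => measurableSet_le (hΔsmeas n b) measurable_const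
  have hBbmeas : ∀ n b, MeasurableSet {ω | Δs n b ω ≤ x b} :=
    fun n b => measurableSet_le (hΔsmeas n b) measurable_const
  have hFmeas : ∀ n b, AEStronglyMeasurable (Fn n b) P :=
    fun n b => (stronglyMeasurable_condExp.mono (h𝒢 n)).aestronglyMeasurable
  have hF0 : ∀ n b, (0 : Ω → ℝ) ≤ᵐ[P] Fn n b := fun n b =>
    condExp_nonneg (Filter.Eventually.of_forall (Set.indicator_nonneg fun _ _ => zero_le_one))
  have hF1 : ∀ n b, Fn n b ≤ᵐ[P] fun _ => (1 : ℝ) := by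
    intro n b
    have hint : Integrable ({ω' | Δs n b ω' ≤ x b}.indicator fun _ => (1 : ℝ)) P :=
      Integrable.indicator (μ := P) (integrable_const (μ := P) (1 : ℝ)) (hBbmeas n b)
    have h1 : P[(fun _ => (1 : ℝ))|𝒢 n] = fun _ => (1 : ℝ) := condExp_const (h𝒢 n) 1
    have hmono := condExp_mono (m := 𝒢 n) (m₀ := F) (μ := P) hint (integrable_const (μ := P) 1)
      (Filter.Eventually.of_forall fun ω =>
        Set.indicator_le' (fun _ _ => le_rfl) (fun _ _ => zero_le_one) ω)
    rw [h1] at hmono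
    exact hmono
  -- key conditional expectation identity
  have hkey : ∀ n, (P (A n ∩ Bs n)).toReal = ∫ ω in A n, (∏ b, Fn n b ω) ∂P := by
    intro n
    have hint : Integrable ((Bs n).indicator fun _ => (1 : ℝ)) P :=
      Integrable.indicator (μ := P) (integrable_const (μ := P) (1 : ℝ)) (hBmeas n)
    have e1 : ∫ ω in A n, (∏ b, Fn n b ω) ∂P
        = ∫ ω in A n, (P[(Bs n).indicator (fun _ => (1 : ℝ))|𝒢 n]) ω ∂P := by
      refine setIntegral_congr_ae (hAmeas n) ?_
      filter_upwards [hcondindep n] with ω hω _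
      rw [hω]
    have e2 : ∫ ω in A n, (P[(Bs n).indicator (fun _ => (1 : ℝ))|𝒢 n]) ω ∂P
        = ∫ ω in A n, (Bs n).indicator (fun _ => (1 : ℝ)) ω ∂P :=
      setIntegral_condExp (h𝒢 n) hint (hAmeasG n)
    have e3 : ∫ ω in A n, (Bs n).indicator (fun _ => (1 : ℝ)) ω ∂P
        = (P (A n ∩ Bs n)).toReal := by
      rw [setIntegral_indicator (hBmeas n), setIntegral_const, smul_eq_mul, mul_one]; rfl
    rw [e1, e2, e3]
  have hFprodbound : ∀ n, ∀ᵐ ω ∂P, ‖∏ b, Fn n b ω‖ ≤ 1 := by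
    intro n
    have hb : ∀ᵐ ω ∂P, ∀ b, 0 ≤ Fn n b ω ∧ Fn n b ω ≤ 1 := by
      rw [ae_all_iff]
      intro b
      filter_upwards [hF0 n b, hF1 n b] with ω h1 h2
      exact ⟨h1, h2⟩
    filter_upwards [hb] with ω hω
    rw [Real.norm_eq_abs, abs_of_nonneg (Finset.prod_nonneg fun b _ => (hω b).1)]
    exact Finset.prod_le_one (fun b _ => (hω b).1) (fun b _ => (hω b).2)
  have hFprod_int : ∀ n, Integrable (fun ω => ∏ b, Fn n b ω) P := by
    intro n
    exact Integrable.mono' (integrable_const (μ := P) (1 : ℝ))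
      (Finset.aestronglyMeasurable_fun_prod _ (fun b _ => hFmeas n b)) (hFprodbound n)
  -- decomposition
  have hdecomp : ∀ n, (P (A n ∩ Bs n)).toReal
      = (∫ ω in A n, ((∏ b, Fn n b ω) - K) ∂P) + K * (P (A n)).toReal := by
    intro n
    rw [hkey n]
    rw [integral_sub ((hFprod_int n).integrableOn)
      (integrableOn_const (measure_lt_top P (A n)).ne)]
    rw [setIntegral_const, smul_eq_mul, Measure.real]
    ring
  -- error term
  have herr := jclt_err_tendsto P Fn c hFmeas hF0 hF1 hc0 hc1 hΔsconv
  have habs : ∀ n, ‖∫ ω in A n, ((∏ b, Fn n b ω) - K) ∂P‖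
      ≤ ∫ ω, |(∏ b, Fn n b ω) - K| ∂P := by
    intro n
    have hi : Integrable (fun ω => |(∏ b, Fn n b ω) - K|) P := by
      have := ((hFprod_int n).sub (integrable_const (μ := P) K)).norm
      refine this.congr (Filter.Eventually.of_forall fun ω => by simp [Real.norm_eq_abs])
    calc ‖∫ ω in A n, ((∏ b, Fn n b ω) - K) ∂P‖
        ≤ ∫ ω in A n, ‖(∏ b, Fn n b ω) - K‖ ∂P := norm_integral_le_integral_norm _
      _ = ∫ ω in A n, |(∏ b, Fn n b ω) - K| ∂P := by
          refine integral_congr_ae (Filter.Eventually.of_forall fun ω => ?_)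
          simp [Real.norm_eq_abs]
      _ ≤ ∫ ω, |(∏ b, Fn n b ω) - K| ∂P :=
          setIntegral_le_integral hi (Filter.Eventually.of_forall fun ω => abs_nonneg _)
  have hR0 : Tendsto (fun n => ∫ ω in A n, ((∏ b, Fn n b ω) - K) ∂P) atTop (𝓝 0) :=
    squeeze_zero_norm habs herr
  have hmain : Tendsto (fun n => (∫ ω in A n, ((∏ b, Fn n b ω) - K) ∂P) + K * (P (A n)).toReal)
      atTop (𝓝 (0 + K * Φ0)) := hR0.add (tendsto_const_nhds.mul hΔconv)
  have hfinal : Tendsto (fun n => (P (A n ∩ Bs n)).toReal) atTop (𝓝 (Φ0 * K)) := by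
    have : (0 : ℝ) + K * Φ0 = Φ0 * K := by ring
    rw [this] at hmain
    exact hmain.congr fun n => (hdecomp n).symm
  refine hfinal.congr fun n => ?_
  have hseteq : A n ∩ Bs n = {ω | Δ n ω ≤ x₀ ∧ ∀ b, Δs n b ω ≤ x b} := by
    ext ω
    simp only [hA, hBs, Set.mem_inter_iff, Set.mem_setOf_eq]
  rw [hseteq]

end JointCLTAux5

/-- asymptotic sample–resample independence: let `𝒢_n ⊆ F` be sub-σ-algebras,
`Δ_n` a `𝒢_n`-measurable real random variable and `Δ_n^{*1}, …, Δ_n^{*B}` real random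
variables that are conditionally independent given `𝒢_n` (encoded via the factorization of
conditional joint CDFs). Let `Φ` be the CDF of a mean-zero Gaussian law on `ℝ` (variance `v`).
If `P(Δ_n ≤ x) → Φ(x)` for every `x` and `E[1{Δ_n^{*b} ≤ x} | 𝒢_n] → Φ(x)` in probability
for every `b` and `x`, then `(Δ_n, Δ_n^{*1}, …, Δ_n^{*B})` converges in distribution to a
vector of `B+1` i.i.d. variables with CDF `Φ`; in particular
`P(Δ_n ≤ x₀, Δ_n^{*1} ≤ x₁, …, Δ_n^{*B} ≤ x_B) → Φ(x₀)Φ(x₁)⋯Φ(x_B)`. -/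
theorem joint_clt_of_conditional_convergence
    {Ω : Type*} {F : MeasurableSpace Ω} (P : Measure Ω) [IsProbabilityMeasure P]
    (B : ℕ) (𝒢 : ℕ → MeasurableSpace Ω) (h𝒢 : ∀ n, 𝒢 n ≤ F)
    (v : NNReal)
    (Δ : ℕ → Ω → ℝ) (hΔmeas : ∀ n, Measurable[𝒢 n] (Δ n))
    (Δs : ℕ → Fin B → Ω → ℝ) (hΔsmeas : ∀ n b, Measurable (Δs n b))
    -- conditional independence of `Δ_n^{*1}, …, Δ_n^{*B}` given `𝒢_n`
    (hcondindep : ∀ (n : ℕ) (x : Fin B → ℝ),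
      (P[Set.indicator {ω | ∀ b, Δs n b ω ≤ x b} (fun _ => (1 : ℝ)) | 𝒢 n])
        =ᵐ[P] fun ω =>
          ∏ b : Fin B, (P[Set.indicator {ω' | Δs n b ω' ≤ x b} (fun _ => (1 : ℝ)) | 𝒢 n]) ω)
    -- (i) unconditional CDF convergence of `Δ_n`
    (hΔconv : ∀ x : ℝ,
      Tendsto (fun n => (P {ω | Δ n ω ≤ x}).toReal) atTop
        (nhds ((gaussianReal 0 v (Set.Iic x)).toReal)))
    -- (ii) conditional CDF convergence (in probability) of each `Δ_n^{*b}`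
    (hΔsconv : ∀ (b : Fin B) (x : ℝ),
      TendstoInMeasure P
        (fun n => P[Set.indicator {ω' | Δs n b ω' ≤ x} (fun _ => (1 : ℝ)) | 𝒢 n])
        atTop (fun _ => (gaussianReal 0 v (Set.Iic x)).toReal)) :
    -- convergence in distribution to `B+1` i.i.d. variables with law `N(0,v)` …
    (∀ g : BoundedContinuousFunction (Fin (B + 1) → ℝ) ℝ,
      Tendsto (fun n => ∫ ω, g (Fin.cases (Δ n ω) (fun b => Δs n b ω)) ∂P) atTop
        (nhds (∫ z, g z ∂(Measure.pi fun _ : Fin (B + 1) => gaussianReal 0 v)))) ∧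
    -- … and in particular joint CDF factorization in the limit
    (∀ (x₀ : ℝ) (x : Fin B → ℝ),
      Tendsto (fun n => (P {ω | Δ n ω ≤ x₀ ∧ ∀ b, Δs n b ω ≤ x b}).toReal) atTop
        (nhds ((gaussianReal 0 v (Set.Iic x₀)).toReal *
          ∏ b : Fin B, (gaussianReal 0 v (Set.Iic (x b))).toReal))) := by
  classical
  have hΦ0 : ∀ y : ℝ, 0 ≤ (gaussianReal 0 v (Set.Iic y)).toReal := fun y => ENNReal.toReal_nonneg
  have hΦ1 : ∀ y : ℝ, (gaussianReal 0 v (Set.Iic y)).toReal ≤ 1 := by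
    intro y
    have h := prob_le_one (μ := gaussianReal 0 v) (s := Set.Iic y)
    have := ENNReal.toReal_mono ENNReal.one_ne_top h
    simpa using this
  have hsecond : ∀ (x₀ : ℝ) (x : Fin B → ℝ),
      Tendsto (fun n => (P {ω | Δ n ω ≤ x₀ ∧ ∀ b, Δs n b ω ≤ x b}).toReal) atTop
        (nhds ((gaussianReal 0 v (Set.Iic x₀)).toReal *
          ∏ b : Fin B, (gaussianReal 0 v (Set.Iic (x b))).toReal)) := by
    intro x₀ x
    exact jclt_step1 P 𝒢 h𝒢 (fun b => (gaussianReal 0 v (Set.Iic (x b))).toReal)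
      ((gaussianReal 0 v (Set.Iic x₀)).toReal) Δ hΔmeas Δs hΔsmeas x₀ x
      (fun n => hcondindep n x) (hΔconv x₀) (fun b => hΦ0 (x b)) (fun b => hΦ1 (x b))
      (fun b => hΔsconv b (x b))
  refine ⟨?_, hsecond⟩
  intro g
  have hvecmeas : ∀ n, Measurable (fun ω => (Fin.cases (Δ n ω) (fun b => Δs n b ω) : Fin (B+1) → ℝ)) := by
    intro n
    refine measurable_pi_lambda _ (fun i => ?_)
    induction i using Fin.cases with
    | zero => simpa using (hΔmeas n).mono (h𝒢 n) le_rfl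
    | succ b => simpa using hΔsmeas n b
  set μn : ℕ → Measure (Fin (B+1) → ℝ) :=
    fun n => P.map (fun ω => (Fin.cases (Δ n ω) (fun b => Δs n b ω) : Fin (B+1) → ℝ)) with hμn
  haveI : ∀ n, IsProbabilityMeasure (μn n) :=
    fun n => Measure.isProbabilityMeasure_map (hvecmeas n).aemeasurable
  have hIic : ∀ x : Fin (B+1) → ℝ,
      Tendsto (fun n => (μn n (Set.univ.pi fun i => Set.Iic (x i))).toReal) atTop
        (𝓝 (((Measure.pi fun _ : Fin (B+1) => gaussianReal 0 v)
          (Set.univ.pi fun i => Set.Iic (x i))).toReal)) := by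
    intro x
    have hset : ∀ n, (fun ω => (Fin.cases (Δ n ω) (fun b => Δs n b ω) : Fin (B+1) → ℝ)) ⁻¹'
        (Set.univ.pi fun i => Set.Iic (x i))
        = {ω | Δ n ω ≤ x 0 ∧ ∀ b : Fin B, Δs n b ω ≤ x b.succ} := by
      intro n
      ext ω
      simp only [Set.mem_preimage, Set.mem_pi, Set.mem_univ, true_implies, Set.mem_Iic,
        Set.mem_setOf_eq]
      rw [Fin.forall_fin_succ]
      simp only [Fin.cases_zero, Fin.cases_succ]
    have hμside : ((Measure.pi fun _ : Fin (B+1) => gaussianReal 0 v)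
        (Set.univ.pi fun i => Set.Iic (x i))).toReal
        = (gaussianReal 0 v (Set.Iic (x 0))).toReal *
          ∏ b : Fin B, (gaussianReal 0 v (Set.Iic (x b.succ))).toReal := by
      rw [Measure.pi_pi, ENNReal.toReal_prod, Fin.prod_univ_succ]
    rw [hμside]
    refine (hsecond (x 0) (fun b => x b.succ)).congr fun n => ?_
    rw [hμn]
    rw [Measure.map_apply (hvecmeas n) (MeasurableSet.univ_pi fun i => measurableSet_Iic),
      hset n]
  have hint := jclt_tendsto_integral hIic g
  refine hint.congr fun n => ?_
  rw [hμn]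
  exact integral_map (hvecmeas n).aemeasurable g.continuous.aestronglyMeasurable
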